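/- Classical Fano's inequality for a partition: let N ≥ 2, let P₁,…,P_N be probability measures on a common measurable space (Ω, F), let A₁,…,A_N be pairwise disjoint events whose union is Ω, and let Q be any probability measure on (Ω, F) such that all KL(Pᵢ, Q) are finite. Then (1/N)·Σᵢ Pᵢ(Aᵢ) ≤ ((1/N)·Σᵢ KL(Pᵢ, Q) + log 2) / log N. -/

import Mathlib

open MeasureTheory
open scoped ENNReal Classical

/-- The Kullback-Leibler divergence between two measures, with value `+∞`
when `P` is not absolutely continuous w.r.t. `Q` or when the log-likelihood
ratio is not integrable. -/
noncomputable def KLdiv {Ω : Type*} [MeasurableSpace Ω] (P Q : Measure Ω) : ℝ≥0∞ :=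
  if P ≪ Q ∧ Integrable (fun ω => Real.log (P.rnDeriv Q ω).toReal) P
  then ENNReal.ofReal (∫ ω, Real.log (P.rnDeriv Q ω).toReal ∂P)
  else ⊤

/-- Tangent-line inequality for `x ↦ x * log x` at the point `c`. -/
lemma tangent_xlogx (x c : ℝ) (hx : 0 ≤ x) (hc : 0 < c) :
    x * Real.log c + x - c ≤ x * Real.log x := by
  rcases eq_or_lt_of_le hx with h | hxpos
  · simp [← h]
    positivity
  · have h1 : Real.log (c / x) ≤ c / x - 1 :=
      Real.log_le_sub_one_of_pos (by positivity)
    have h2 : Real.log (c / x) = Real.log c - Real.log x :=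
      Real.log_div hc.ne' hxpos.ne'
    rw [h2] at h1
    have h3 : x * (Real.log c - Real.log x) ≤ x * (c / x - 1) :=
      mul_le_mul_of_nonneg_left h1 hx
    have h4 : x * (c / x - 1) = c - x := by field_simp
    nlinarith

/-- Lower bound for one piece of the KL integral via the tangent line at a
constant, over a set and its complement. -/
lemma kl_piece_bound {Ω : Type*} [MeasurableSpace Ω] (P Q : Measure Ω)
    [IsProbabilityMeasure P] [IsProbabilityMeasure Q]
    (hPQ : P ≪ Q)
    (hint : Integrable (fun ω => Real.log (P.rnDeriv Q ω).toReal) P)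
    {A : Set Ω} (hA : MeasurableSet A) {c d : ℝ} (hc : 0 < c) (hd : 0 < d) :
    (P A).toReal * Real.log c + (P A).toReal - c * (Q A).toReal
      + ((P Aᶜ).toReal * Real.log d + (P Aᶜ).toReal - d * (Q Aᶜ).toReal)
      ≤ ∫ ω, Real.log (P.rnDeriv Q ω).toReal ∂P := by
  set f : Ω → ℝ := fun ω => (P.rnDeriv Q ω).toReal with hf
  have hfi : Integrable f Q := Measure.integrable_toReal_rnDeriv
  have heq : ∫ ω, Real.log (f ω) ∂P = ∫ ω, f ω * Real.log (f ω) ∂Q := by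
    rw [← integral_rnDeriv_smul hPQ (f := fun ω => Real.log (f ω))]
    simp [smul_eq_mul, hf]
  have hQi : Integrable (fun ω => f ω * Real.log (f ω)) Q := by
    have := (integrable_rnDeriv_smul_iff hPQ
      (f := fun ω => Real.log (f ω))).mpr hint
    simpa [smul_eq_mul, hf] using this
  have hbound : ∀ (s : Set Ω), MeasurableSet s → ∀ e : ℝ, 0 < e →
      (P s).toReal * Real.log e + (P s).toReal - e * (Q s).toReal
        ≤ ∫ ω in s, f ω * Real.log (f ω) ∂Q := by
    intro s hs e he
    have hlow : Integrable (fun ω => f ω * Real.log e + f ω - e) Q :=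
      ((hfi.mul_const _).add hfi).sub (integrable_const e)
    have h1 : ∫ ω in s, (f ω * Real.log e + f ω - e) ∂Q
        ≤ ∫ ω in s, f ω * Real.log (f ω) ∂Q := by
      refine setIntegral_mono_on hlow.integrableOn hQi.integrableOn hs ?_
      intro x _
      exact tangent_xlogx (f x) e ENNReal.toReal_nonneg he
    have h2 : ∫ ω in s, f ω ∂Q = (P s).toReal :=
      Measure.setIntegral_toReal_rnDeriv hPQ s
    have h3 : ∫ ω in s, (f ω * Real.log e + f ω - e) ∂Q
        = (P s).toReal * Real.log e + (P s).toReal - e * (Q s).toReal := by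
      calc ∫ ω in s, (f ω * Real.log e + f ω - e) ∂Q
          = (∫ ω in s, (f ω * Real.log e + f ω) ∂Q) - ∫ _ω in s, e ∂Q :=
            integral_sub ((hfi.mul_const _).add hfi).integrableOn
              (integrable_const e).integrableOn
        _ = ((∫ ω in s, f ω * Real.log e ∂Q) + ∫ ω in s, f ω ∂Q) - ∫ _ω in s, e ∂Q := by
            rw [integral_add (hfi.mul_const _).integrableOn hfi.integrableOn]
        _ = (P s).toReal * Real.log e + (P s).toReal - e * (Q s).toReal := by
            rw [integral_mul_const, h2, setIntegral_const]
            simp [smul_eq_mul, mul_comm, Measure.real]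
    linarith
  have hsplit : ∫ ω, f ω * Real.log (f ω) ∂Q
      = (∫ ω in A, f ω * Real.log (f ω) ∂Q)
        + ∫ ω in Aᶜ, f ω * Real.log (f ω) ∂Q :=
    (integral_add_compl hA hQi).symm
  have hAb := hbound A hA c hc
  have hAc := hbound Aᶜ hA.compl d hd
  rw [heq, hsplit]
  linarith

/-- Classical Fano's inequality, for events forming a partition. -/
theorem fano_partition {Ω : Type*} [MeasurableSpace Ω] (N : ℕ) (hN : 2 ≤ N)
    (P : Fin N → Measure Ω) [∀ i, IsProbabilityMeasure (P i)]
    (Q : Measure Ω) [IsProbabilityMeasure Q]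
    (A : Fin N → Set Ω) (hA : ∀ i, MeasurableSet (A i))
    (hdisj : Pairwise (Function.onFun Disjoint A))
    (hcover : (⋃ i, A i) = Set.univ)
    (hKL : ∀ i, KLdiv (P i) Q ≠ ⊤) :
    (1 / N : ℝ) * ∑ i, (P i (A i)).toReal ≤
      ((1 / N : ℝ) * ∑ i, (KLdiv (P i) Q).toReal + Real.log 2) / Real.log N := by
  -- basic numeric facts
  have hNR : (2 : ℝ) ≤ (N : ℝ) := by exact_mod_cast hN
  have hNpos : (0 : ℝ) < N := by linarith
  have hN1 : (1 : ℝ) ≤ (N : ℝ) - 1 := by linarith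
  have hlogN : 0 < Real.log N := Real.log_pos (by linarith)
  -- extract the KL conditions
  have hcond : ∀ i, (P i ≪ Q) ∧
      Integrable (fun ω => Real.log ((P i).rnDeriv Q ω).toReal) (P i) := by
    intro i
    by_contra h
    exact hKL i (by rw [KLdiv, if_neg h])
  -- the integral is a lower bound for (KLdiv _).toReal
  have hIle : ∀ i, ∫ ω, Real.log ((P i).rnDeriv Q ω).toReal ∂(P i)
      ≤ (KLdiv (P i) Q).toReal := by
    intro i
    rw [KLdiv, if_pos (hcond i)]
    set x := ∫ ω, Real.log ((P i).rnDeriv Q ω).toReal ∂(P i)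
    rcases le_or_gt 0 x with h | h
    · rw [ENNReal.toReal_ofReal h]
    · rw [ENNReal.ofReal_of_nonpos h.le]
      simpa using h.le
  -- abbreviations
  set p : Fin N → ℝ := fun i => (P i (A i)).toReal with hp
  set S : ℝ := ∑ i, p i with hS
  set K : ℝ := ∑ i, (KLdiv (P i) Q).toReal with hK
  -- sum of Q masses is 1
  have hQsum : ∑ i, (Q (A i)).toReal = 1 := by
    have h1 : ∑ i, Q (A i) = 1 := by
      rw [← tsum_fintype (L := .unconditional _), ← measure_iUnion hdisj hA, hcover, measure_univ]
    have h2 : (∑ i, Q (A i)).toReal = (1 : ℝ≥0∞).toReal := by rw [h1]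
    rwa [ENNReal.toReal_sum (fun i _ => measure_ne_top Q (A i)), ENNReal.toReal_one] at h2
  -- complements of probability measures
  have hpc : ∀ i, (P i (A i)ᶜ).toReal = 1 - p i := by
    intro i
    rw [measure_compl (hA i) (measure_ne_top _ _), measure_univ,
      ENNReal.toReal_sub_of_le prob_le_one (by simp), ENNReal.toReal_one]
  have hqc : ∀ i, (Q (A i)ᶜ).toReal = 1 - (Q (A i)).toReal := by
    intro i
    rw [measure_compl (hA i) (measure_ne_top _ _), measure_univ,
      ENNReal.toReal_sub_of_le prob_le_one (by simp), ENNReal.toReal_one]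
  -- bounds on p i
  have hp01 : ∀ i, 0 ≤ p i ∧ p i ≤ 1 := by
    intro i
    constructor
    · exact ENNReal.toReal_nonneg
    · simpa using ENNReal.toReal_mono (by simp) (prob_le_one (μ := P i) (s := A i))
  have hSN : S ≤ N := by
    rw [hS]
    calc ∑ i, p i ≤ ∑ _i : Fin N, (1 : ℝ) :=
          Finset.sum_le_sum fun i _ => (hp01 i).2
      _ = N := by simp
  -- the tangent constants
  set c : ℝ := N / 2 with hcdef
  set d : ℝ := N / (2 * ((N : ℝ) - 1)) with hddef
  have hc : 0 < c := by positivity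
  have hd : 0 < d := by rw [hddef]; positivity
  -- per-index lower bound and sum
  have hmain : ∀ i, p i * Real.log c + p i - c * (Q (A i)).toReal
      + ((1 - p i) * Real.log d + (1 - p i) - d * (1 - (Q (A i)).toReal))
      ≤ (KLdiv (P i) Q).toReal := by
    intro i
    have := kl_piece_bound (P i) Q (hcond i).1 (hcond i).2 (hA i) hc hd
    rw [hpc i, hqc i] at this
    exact this.trans (hIle i)
  have hsum : S * Real.log c + S - c * 1
      + (((N : ℝ) - S) * Real.log d + ((N : ℝ) - S) - d * ((N : ℝ) - 1)) ≤ K := by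
    have h := Finset.sum_le_sum (fun i (_ : i ∈ Finset.univ) => hmain i)
    rw [hK]
    refine le_trans (le_of_eq ?_) h
    rw [Finset.sum_add_distrib, Finset.sum_sub_distrib, Finset.sum_add_distrib,
      Finset.sum_sub_distrib, Finset.sum_add_distrib, ← Finset.sum_mul,
      ← Finset.mul_sum, hQsum, ← Finset.sum_mul, ← Finset.mul_sum]
    have e1 : ∑ i : Fin N, (1 - p i) = (N : ℝ) - S := by
      rw [Finset.sum_sub_distrib, hS]; simp
    have e2 : ∑ i : Fin N, (1 - (Q (A i)).toReal) = (N : ℝ) - 1 := by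
      rw [Finset.sum_sub_distrib, hQsum]; simp
    rw [e1, e2, hS]
  -- evaluate logs
  have hlogc : Real.log c = Real.log N - Real.log 2 :=
    Real.log_div (by positivity) (by norm_num)
  have hlogd : Real.log d = Real.log N - (Real.log 2 + Real.log ((N : ℝ) - 1)) := by
    rw [hddef, Real.log_div (by positivity) (by positivity),
      Real.log_mul (by norm_num) (by linarith)]
  have hlogN1 : Real.log ((N : ℝ) - 1) ≤ Real.log N :=
    Real.log_le_log (by linarith) (by linarith)
  -- conclude the key inequality  K ≥ S log N − N log 2
  have hkey : S * Real.log N - (N : ℝ) * Real.log 2 ≤ K := by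
    have hcd : c * 1 + d * ((N : ℝ) - 1) = (N : ℝ) := by
      rw [hcdef, hddef]; field_simp; ring
    nlinarith [hsum, mul_nonneg (by linarith : (0:ℝ) ≤ (N : ℝ) - S)
      (by linarith : (0:ℝ) ≤ Real.log N - Real.log ((N : ℝ) - 1))]
  -- final rearrangement
  rw [le_div_iff₀ hlogN]
  have h1N : (0 : ℝ) < 1 / N := by positivity
  have h5 := mul_le_mul_of_nonneg_left hkey h1N.le
  have hl2 : (1 / (N : ℝ)) * ((N : ℝ) * Real.log 2) = Real.log 2 := by
    field_simp
  nlinarith [h5, hl2]
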